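/- Let n ≥ 2 and let w : Fin n → ℝ be a non-constant logit vector. Then the function α ↦ H(softmax(α • w)) is strictly decreasing on (0, ∞); in particular, for every α > 1, H(softmax(α • w)) < H(softmax(w)). Hence routing entropy is not invariant under logit scaling. -/

import Mathlib

/-- The softmax function on `ℝⁿ`. -/
noncomputable def softmax {n : ℕ} (u : Fin n → ℝ) : Fin n → ℝ :=
  fun i => Real.exp (u i) / ∑ j, Real.exp (u j)

/-- Shannon entropy of a probability vector (with the convention `0 · log 0 = 0`,
which holds since `Real.log 0 = 0` in Mathlib). -/
noncomputable def entropy {n : ℕ} (p : Fin n → ℝ) : ℝ :=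
  -∑ i, p i * Real.log (p i)

open Real Finset

private lemma entropy_softmax_eq {n : ℕ} (w : Fin n → ℝ) (i0 : Fin n) (α : ℝ) :
    entropy (softmax (α • w)) =
      Real.log (∑ i, Real.exp (α * w i)) -
        α * (∑ i, Real.exp (α * w i) * w i) / (∑ i, Real.exp (α * w i)) := by
  set Z : ℝ := ∑ i, Real.exp (α * w i) with hZ
  have hZpos : 0 < Z := Finset.sum_pos (fun i _ => Real.exp_pos _) ⟨i0, Finset.mem_univ _⟩
  have hstep : ∀ i : Fin n,
      softmax (α • w) i * Real.log (softmax (α • w) i) =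
        (α * (Real.exp (α * w i) * w i) - Real.exp (α * w i) * Real.log Z) / Z := by
    intro i
    simp only [softmax, Pi.smul_apply, smul_eq_mul, ← hZ]
    rw [Real.log_div (Real.exp_ne_zero _) hZpos.ne', Real.log_exp]
    field_simp
  simp only [entropy, hstep, ← Finset.sum_div, Finset.sum_sub_distrib,
    ← Finset.mul_sum, ← Finset.sum_mul, ← hZ]
  field_simp
  ring

/-- For `n ≥ 2` and a non-constant logit vector `w`, the map
`α ↦ H(softmax (α • w))` is strictly decreasing on `(0, ∞)`; in particular for every
`α > 1`, `H(softmax (α • w)) < H(softmax w)`. -/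
theorem entropy_softmax_strictAnti {n : ℕ} (hn : 2 ≤ n) (w : Fin n → ℝ)
    (hw : ∃ i j, w i ≠ w j) :
    StrictAntiOn (fun α : ℝ => entropy (softmax (α • w))) (Set.Ioi 0) ∧
    ∀ α : ℝ, 1 < α → entropy (softmax (α • w)) < entropy (softmax w) := by
  obtain ⟨i0, j0, hij⟩ := hw
  set Z : ℝ → ℝ := fun α => ∑ i, Real.exp (α * w i) with hZdef
  set E : ℝ → ℝ := fun α => ∑ i, Real.exp (α * w i) * w i with hEdef
  set F : ℝ → ℝ := fun α => ∑ i, Real.exp (α * w i) * w i * w i with hFdef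
  have hZpos : ∀ α, 0 < Z α := fun α =>
    Finset.sum_pos (fun i _ => Real.exp_pos _) ⟨i0, Finset.mem_univ _⟩
  have hfun : (fun α : ℝ => entropy (softmax (α • w))) =
      fun α => Real.log (Z α) - α * E α / Z α := by
    funext α; exact entropy_softmax_eq w i0 α
  have hZ' : ∀ α, HasDerivAt Z (E α) α := fun α =>
    HasDerivAt.fun_sum fun i _ => (hasDerivAt_mul_const (w i)).exp
  have hE' : ∀ α, HasDerivAt E (F α) α := fun α =>
    HasDerivAt.fun_sum fun i _ => ((hasDerivAt_mul_const (w i)).exp).mul_const (w i)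
  have hg : ∀ α, HasDerivAt (fun α => Real.log (Z α) - α * E α / Z α)
      (E α / Z α - ((1 * E α + α * F α) * Z α - α * E α * E α) / (Z α) ^ 2) α := fun α =>
    ((hZ' α).log (hZpos α).ne').sub
      (((hasDerivAt_id α).mul (hE' α)).div (hZ' α) (hZpos α).ne')
  -- variance positivity
  have hvar : ∀ α : ℝ, 0 < F α * Z α - E α * E α := by
    intro α
    have e1 : (∑ i, Real.exp (α * w i) * w i * w i) * (∑ j, Real.exp (α * w j)) =
        ∑ i, ∑ j, (Real.exp (α * w i) * w i * w i) * Real.exp (α * w j) :=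
      Finset.sum_mul_sum _ _ _ _
    have e2 : (∑ i, Real.exp (α * w i) * w i) * (∑ j, Real.exp (α * w j) * w j) =
        ∑ i, ∑ j, (Real.exp (α * w i) * w i) * (Real.exp (α * w j) * w j) :=
      Finset.sum_mul_sum _ _ _ _
    have e3 : (∑ i, Real.exp (α * w i)) * (∑ j, Real.exp (α * w j) * w j * w j) =
        ∑ i, ∑ j, Real.exp (α * w i) * (Real.exp (α * w j) * w j * w j) :=
      Finset.sum_mul_sum _ _ _ _
    have key : ∑ i, ∑ j, Real.exp (α * w i) * Real.exp (α * w j) * (w i - w j) ^ 2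
        = F α * Z α - 2 * (E α * E α) + Z α * F α := by
      have hterm : ∀ i j : Fin n,
          Real.exp (α * w i) * Real.exp (α * w j) * (w i - w j) ^ 2
          = (Real.exp (α * w i) * w i * w i) * Real.exp (α * w j)
            - 2 * ((Real.exp (α * w i) * w i) * (Real.exp (α * w j) * w j))
            + Real.exp (α * w i) * (Real.exp (α * w j) * w j * w j) := by
        intro i j; ring
      simp only [hZdef, hEdef, hFdef]
      simp only [hterm, Finset.sum_add_distrib, Finset.sum_sub_distrib, ← Finset.mul_sum,
        ← Finset.sum_mul]
    have hS : 0 < ∑ i, ∑ j, Real.exp (α * w i) * Real.exp (α * w j) * (w i - w j) ^ 2 := by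
      refine Finset.sum_pos' (fun i _ => Finset.sum_nonneg fun j _ => by positivity)
        ⟨i0, Finset.mem_univ _, Finset.sum_pos' (fun j _ => by positivity)
          ⟨j0, Finset.mem_univ _, ?_⟩⟩
      exact mul_pos (mul_pos (Real.exp_pos _) (Real.exp_pos _))
        (sq_pos_of_ne_zero (sub_ne_zero.mpr hij))
    nlinarith [hS, key]
  have hderiv_neg : ∀ α ∈ Set.Ioi (0:ℝ),
      E α / Z α - ((1 * E α + α * F α) * Z α - α * E α * E α) / (Z α) ^ 2 < 0 := by
    intro α hα
    have hα0 : (0:ℝ) < α := hα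
    have hZα := hZpos α
    have hv := hvar α
    have heq : E α / Z α - ((1 * E α + α * F α) * Z α - α * E α * E α) / (Z α) ^ 2
        = -(α * (F α * Z α - E α * E α)) / (Z α) ^ 2 := by
      field_simp
      ring
    rw [heq]
    apply div_neg_of_neg_of_pos
    · simp only [neg_neg, neg_lt, neg_zero]
      positivity
    · positivity
  have hanti : StrictAntiOn (fun α => Real.log (Z α) - α * E α / Z α) (Set.Ioi 0) := by
    apply strictAntiOn_of_deriv_neg (convex_Ioi 0)
    · exact fun x _ => ((hg x).differentiableAt.continuousAt).continuousWithinAt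
    · intro x hx
      rw [interior_Ioi] at hx
      rw [(hg x).deriv]
      exact hderiv_neg x hx
  constructor
  · rw [hfun]; exact hanti
  · intro α hα
    have h1 : (1:ℝ) ∈ Set.Ioi (0:ℝ) := by norm_num
    have hαm : α ∈ Set.Ioi (0:ℝ) := Set.mem_Ioi.mpr (by linarith)
    have h := hanti h1 hαm hα
    simp only [hZdef, hEdef] at h
    rw [entropy_softmax_eq w i0 α]
    have hw1 : entropy (softmax w) = entropy (softmax ((1:ℝ) • w)) := by rw [one_smul]
    rw [hw1, entropy_softmax_eq w i0 1]
    simpa using h
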